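/- Let n ≥ 1 and let a, b, c, f : {0, …, n−1} → ℝ with a₀ = 0 and c_{n−1} = 0, satisfying |b_i| > |a_i| + |c_i| for every i. Define α₀ = c₀/b₀, β₀ = f₀/b₀, and recursively α_i = c_i/(b_i − a_i α_{i−1}), β_i = (f_i − a_i β_{i−1})/(b_i − a_i α_{i−1}); then define x_{n−1} = β_{n−1} and x_i = β_i − α_i x_{i+1} for i = n−2 down to 0. Then the vector x is the unique solution of the tridiagonal linear system A x = f, where A is the n × n matrix with A_{ii} = b_i, A_{i,i−1} = a_i, A_{i,i+1} = c_i, and all other entries zero. -/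

import Mathlib

/-- Thomas forward-sweep coefficients `α`: `α₀ = c₀ / b₀` and
`αᵢ = cᵢ / (bᵢ − aᵢ αᵢ₋₁)`. -/
noncomputable def thomasAlpha (a b c : ℕ → ℝ) : ℕ → ℝ
  | 0 => c 0 / b 0
  | i + 1 => c (i + 1) / (b (i + 1) - a (i + 1) * thomasAlpha a b c i)

/-- Thomas forward-sweep coefficients `β`: `β₀ = f₀ / b₀` and
`βᵢ = (fᵢ − aᵢ βᵢ₋₁) / (bᵢ − aᵢ αᵢ₋₁)`. -/
noncomputable def thomasBeta (a b c f : ℕ → ℝ) : ℕ → ℝ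
  | 0 => f 0 / b 0
  | i + 1 => (f (i + 1) - a (i + 1) * thomasBeta a b c f i) /
      (b (i + 1) - a (i + 1) * thomasAlpha a b c i)

/-- Backward substitution of the Thomas method, indexed from the last unknown:
`thomasRev a b c f n j = x_{n−1−j}`, i.e. `x_{n−1} = β_{n−1}` and
`xᵢ = βᵢ − αᵢ x_{i+1}`. -/
noncomputable def thomasRev (a b c f : ℕ → ℝ) (n : ℕ) : ℕ → ℝ
  | 0 => thomasBeta a b c f (n - 1)
  | j + 1 => thomasBeta a b c f (n - 1 - (j + 1)) -
      thomasAlpha a b c (n - 1 - (j + 1)) * thomasRev a b c f n j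


/-- Denominators of the Thomas sweep. -/
noncomputable def thomasD (a b c : ℕ → ℝ) : ℕ → ℝ
  | 0 => b 0
  | i + 1 => b (i + 1) - a (i + 1) * thomasAlpha a b c i

lemma thomasAlpha_eq (a b c : ℕ → ℝ) : ∀ i, thomasAlpha a b c i = c i / thomasD a b c i
  | 0 => rfl
  | i + 1 => rfl

lemma thomasD_bound (a b c : ℕ → ℝ) (n : ℕ)
    (hdom : ∀ i < n, |a i| + |c i| < |b i|) :
    ∀ i, i < n → |c i| < |thomasD a b c i| := by
  intro i
  induction i with
  | zero =>
    intro h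
    have h0 := hdom 0 h
    have : (0:ℝ) ≤ |a 0| := abs_nonneg _
    have : |thomasD a b c 0| = |b 0| := rfl
    rw [this]; linarith
  | succ i ih =>
    intro h
    have hi : i < n := by omega
    have h1 := ih hi
    have hD : 0 < |thomasD a b c i| := lt_of_le_of_lt (abs_nonneg _) h1
    have hα : |thomasAlpha a b c i| < 1 := by
      rw [thomasAlpha_eq, abs_div]
      exact (div_lt_one hD).mpr h1
    have hd := hdom (i+1) h
    have habs : |a (i+1) * thomasAlpha a b c i| ≤ |a (i+1)| := by
      rw [abs_mul]
      nlinarith [abs_nonneg (a (i+1)), abs_nonneg (thomasAlpha a b c i)]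
    have hDd : thomasD a b c (i+1) = b (i+1) - a (i+1) * thomasAlpha a b c i := rfl
    have := abs_sub_abs_le_abs_sub (b (i+1)) (a (i+1) * thomasAlpha a b c i)
    rw [hDd]
    linarith

lemma thomasD_ne (a b c : ℕ → ℝ) (n : ℕ)
    (hdom : ∀ i < n, |a i| + |c i| < |b i|) (i : ℕ) (h : i < n) :
    thomasD a b c i ≠ 0 := by
  have := thomasD_bound a b c n hdom i h
  intro h0
  rw [h0, abs_zero] at this
  have := abs_nonneg (c i)
  linarith

/-- A row equation of the tridiagonal system, for a sequence indexed by `ℕ`. -/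
def ThomasRow (a b c f : ℕ → ℝ) (y : ℕ → ℝ) (i : ℕ) : Prop :=
  (if i = 0 then 0 else a i * y (i - 1)) + b i * y i + c i * y (i + 1) = f i

lemma thomas_rec_of_rows (a b c f : ℕ → ℝ) (n : ℕ)
    (hdom : ∀ i < n, |a i| + |c i| < |b i|) (y : ℕ → ℝ)
    (hy : ∀ i < n, ThomasRow a b c f y i) :
    ∀ i < n, y i = thomasBeta a b c f i - thomasAlpha a b c i * y (i + 1) := by
  intro i
  induction i with
  | zero =>
    intro h
    have hr := hy 0 h
    have hb : thomasD a b c 0 ≠ 0 := thomasD_ne a b c n hdom 0 h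
    have hb' : b 0 ≠ 0 := hb
    unfold ThomasRow at hr
    rw [if_pos rfl] at hr
    show y 0 = f 0 / b 0 - c 0 / b 0 * y 1
    field_simp
    linear_combination hr
  | succ i ih =>
    intro h
    have hi : i < n := by omega
    have hrec := ih hi
    have hr := hy (i+1) h
    have hD : thomasD a b c (i+1) ≠ 0 := thomasD_ne a b c n hdom (i+1) h
    unfold ThomasRow at hr
    rw [if_neg (Nat.succ_ne_zero i)] at hr
    simp only [Nat.add_sub_cancel] at hr
    have hDd : thomasD a b c (i+1) = b (i+1) - a (i+1) * thomasAlpha a b c i := rfl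
    have hD' : (b (i + 1) - a (i + 1) * thomasAlpha a b c i) ≠ 0 := hDd ▸ hD
    rw [hrec] at hr
    have hkey : (b (i+1) - a (i+1) * thomasAlpha a b c i) * y (i+1)
        = f (i+1) - a (i+1) * thomasBeta a b c f i - c (i+1) * y (i+1+1) := by
      linear_combination hr
    show y (i+1) = (f (i + 1) - a (i + 1) * thomasBeta a b c f i) /
        (b (i + 1) - a (i + 1) * thomasAlpha a b c i) -
      c (i+1) / (b (i + 1) - a (i + 1) * thomasAlpha a b c i) * y (i+2)
    field_simp
    linear_combination hkey

lemma thomas_rows_of_rec (a b c f : ℕ → ℝ) (n : ℕ)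
    (hdom : ∀ i < n, |a i| + |c i| < |b i|) (y : ℕ → ℝ)
    (hy : ∀ i < n, y i = thomasBeta a b c f i - thomasAlpha a b c i * y (i + 1)) :
    ∀ i < n, ThomasRow a b c f y i := by
  intro i
  match i with
  | 0 =>
    intro h
    have hb : b 0 ≠ 0 := thomasD_ne a b c n hdom 0 h
    have h0 := hy 0 h
    unfold ThomasRow
    rw [if_pos rfl, h0]
    show 0 + b 0 * (f 0 / b 0 - c 0 / b 0 * y 1) + c 0 * y 1 = f 0
    field_simp
    ring
  | i + 1 =>
    intro h
    have hi : i < n := by omega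
    have h1 := hy i hi
    have h2 := hy (i+1) h
    have hD : thomasD a b c (i+1) ≠ 0 := thomasD_ne a b c n hdom (i+1) h
    have hDd : thomasD a b c (i+1) = b (i+1) - a (i+1) * thomasAlpha a b c i := rfl
    unfold ThomasRow
    rw [if_neg (Nat.succ_ne_zero i)]
    simp only [Nat.add_sub_cancel]
    rw [h1, h2]
    show a (i+1) * (thomasBeta a b c f i - thomasAlpha a b c i *
        (thomasBeta a b c f (i+1) - thomasAlpha a b c (i+1) * y (i+2))) +
      b (i+1) * (thomasBeta a b c f (i+1) - thomasAlpha a b c (i+1) * y (i+2)) +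
      c (i+1) * y (i+2) = f (i+1)
    have hβ : thomasBeta a b c f (i+1) = (f (i + 1) - a (i + 1) * thomasBeta a b c f i) /
        thomasD a b c (i+1) := rfl
    have hα : thomasAlpha a b c (i+1) = c (i+1) / thomasD a b c (i+1) := rfl
    have hD' : (b (i + 1) - a (i + 1) * thomasAlpha a b c i) ≠ 0 := hDd ▸ hD
    rw [hβ, hα, hDd]
    field_simp
    ring
lemma thomas_alpha_last (a b c : ℕ → ℝ) (n : ℕ) (hc : c (n-1) = 0) :
    thomasAlpha a b c (n-1) = 0 := by
  rw [thomasAlpha_eq, hc, zero_div]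

lemma thomas_backsub (a b c f : ℕ → ℝ) (n : ℕ) (hn : 1 ≤ n) (hc : c (n-1) = 0)
    (y : ℕ → ℝ)
    (hy : ∀ i < n, y i = thomasBeta a b c f i - thomasAlpha a b c i * y (i+1)) :
    ∀ j, j ≤ n - 1 → y (n - 1 - j) = thomasRev a b c f n j := by
  intro j
  induction j with
  | zero =>
    intro _
    have h := hy (n-1) (by omega)
    rw [thomas_alpha_last a b c n hc] at h
    rw [thomasRev]
    simpa using h
  | succ j ih =>
    intro hj
    have h := hy (n-1-(j+1)) (by omega)
    have hidx : n - 1 - (j+1) + 1 = n - 1 - j := by omega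
    rw [hidx, ih (by omega)] at h
    rw [thomasRev]
    exact h

lemma thomas_mulVec_row (n : ℕ) (a b c : ℕ → ℝ)
    (A : Matrix (Fin n) (Fin n) ℝ)
    (hA : ∀ i j : Fin n, A i j =
      if (i : ℕ) = j then b i
      else if (i : ℕ) = (j : ℕ) + 1 then a i
      else if (j : ℕ) = (i : ℕ) + 1 then c i
      else 0)
    (z : Fin n → ℝ) (Z : ℕ → ℝ)
    (hZ : ∀ (k : ℕ) (h : k < n), Z k = z ⟨k, h⟩)
    (hZ0 : ∀ k, n ≤ k → Z k = 0) (i : Fin n) :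
    A.mulVec z i =
      (if (i : ℕ) = 0 then 0 else a i * Z ((i : ℕ) - 1)) + b i * Z i + c i * Z ((i : ℕ) + 1) := by
  have key : ∀ j : Fin n, A i j * z j =
      (if (i : ℕ) = (j : ℕ) + 1 then a i * z j else 0) +
      (if (j : ℕ) = (i : ℕ) then b i * z j else 0) +
      (if (j : ℕ) = (i : ℕ) + 1 then c i * z j else 0) := by
    intro j
    rw [hA]
    split_ifs <;> first | omega | ring
  have S1 : (∑ j : Fin n, if (i : ℕ) = (j : ℕ) + 1 then a i * z j else 0) =
      (if (i : ℕ) = 0 then 0 else a i * Z ((i : ℕ) - 1)) := by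
    by_cases h0 : (i : ℕ) = 0
    · rw [if_pos h0]
      apply Finset.sum_eq_zero
      intro j _
      rw [if_neg (by omega)]
    · rw [if_neg h0]
      have hi' : (i : ℕ) - 1 < n := by omega
      rw [Finset.sum_eq_single (⟨(i : ℕ) - 1, hi'⟩ : Fin n)]
      · rw [if_pos (show (i : ℕ) = (i : ℕ) - 1 + 1 by omega), hZ _ hi']
      · intro j _ hj
        apply if_neg
        intro hcond
        exact hj (Fin.ext (show (j : ℕ) = (i : ℕ) - 1 by omega))
      · intro hmem; exact absurd (Finset.mem_univ _) hmem
  have S2 : (∑ j : Fin n, if (j : ℕ) = (i : ℕ) then b i * z j else 0) = b i * Z (i : ℕ) := by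
    rw [Finset.sum_eq_single i]
    · rw [if_pos rfl, hZ _ i.isLt]
    · intro j _ hj
      apply if_neg
      intro hcond
      exact hj (Fin.ext hcond)
    · intro hmem; exact absurd (Finset.mem_univ _) hmem
  have S3 : (∑ j : Fin n, if (j : ℕ) = (i : ℕ) + 1 then c i * z j else 0) =
      c i * Z ((i : ℕ) + 1) := by
    by_cases h : (i : ℕ) + 1 < n
    · rw [Finset.sum_eq_single (⟨(i : ℕ) + 1, h⟩ : Fin n)]
      · rw [if_pos rfl, hZ _ h]
      · intro j _ hj
        apply if_neg
        intro hcond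
        exact hj (Fin.ext hcond)
      · intro hmem; exact absurd (Finset.mem_univ _) hmem
    · rw [hZ0 _ (by omega), mul_zero]
      apply Finset.sum_eq_zero
      intro j _
      exact if_neg (by omega)
  show (∑ j : Fin n, A i j * z j) = _
  rw [Finset.sum_congr rfl (fun j _ => key j), Finset.sum_add_distrib, Finset.sum_add_distrib,
    S1, S2, S3]

/-- Correctness of the Thomas method: under strict row diagonal dominance
`|bᵢ| > |aᵢ| + |cᵢ|` (with `a₀ = 0`, `c_{n−1} = 0`), the vector produced by the
forward sweep and backward substitution is the unique solution of the
tridiagonal system `A x = f`. -/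
theorem thomas_method_solves_tridiagonal_system
    (n : ℕ) (hn : 1 ≤ n) (a b c f : ℕ → ℝ)
    (ha : a 0 = 0) (hc : c (n - 1) = 0)
    (hdom : ∀ i < n, |a i| + |c i| < |b i|)
    (A : Matrix (Fin n) (Fin n) ℝ)
    (hA : ∀ i j : Fin n, A i j =
      if (i : ℕ) = j then b i
      else if (i : ℕ) = (j : ℕ) + 1 then a i
      else if (j : ℕ) = (i : ℕ) + 1 then c i
      else 0)
    (x : Fin n → ℝ) (hx : x = fun i : Fin n => thomasRev a b c f n (n - 1 - (i : ℕ))) :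
    A.mulVec x = (fun i : Fin n => f i) ∧
    ∀ y : Fin n → ℝ, A.mulVec y = (fun i : Fin n => f i) → y = x := by
  classical
  set X : ℕ → ℝ := fun k => if h : k < n then x ⟨k, h⟩ else 0 with hXdef
  have hXk : ∀ (k : ℕ) (h : k < n), X k = x ⟨k, h⟩ := fun k h => dif_pos h
  have hX0 : ∀ k, n ≤ k → X k = 0 := fun k h => dif_neg (by omega)
  have hxval : ∀ (k : ℕ) (h : k < n), x ⟨k, h⟩ = thomasRev a b c f n (n - 1 - k) := by
    intro k h; rw [hx]
  have hrecX : ∀ i < n, X i = thomasBeta a b c f i - thomasAlpha a b c i * X (i + 1) := by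
    intro i hi
    rw [hXk i hi, hxval i hi]
    by_cases hlast : i = n - 1
    · subst hlast
      rw [show n - 1 - (n - 1) = 0 by omega, thomasRev,
        thomas_alpha_last a b c n hc]
      ring
    · rw [show n - 1 - i = (n - 1 - (i + 1)) + 1 by omega, thomasRev,
        show n - 1 - ((n - 1 - (i + 1)) + 1) = i by omega,
        show X (i + 1) = thomasRev a b c f n (n - 1 - (i + 1)) from by
          rw [hXk (i + 1) (by omega), hxval (i + 1) (by omega)]]
  constructor
  · funext i
    have hrow := thomas_rows_of_rec a b c f n hdom X hrecX (i : ℕ) i.isLt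
    unfold ThomasRow at hrow
    rw [thomas_mulVec_row n a b c A hA x X hXk hX0 i]
    exact hrow
  · intro y hy
    set Y : ℕ → ℝ := fun k => if h : k < n then y ⟨k, h⟩ else 0 with hYdef
    have hYk : ∀ (k : ℕ) (h : k < n), Y k = y ⟨k, h⟩ := fun k h => dif_pos h
    have hY0 : ∀ k, n ≤ k → Y k = 0 := fun k h => dif_neg (by omega)
    have hrows : ∀ i < n, ThomasRow a b c f Y i := by
      intro i hi
      unfold ThomasRow
      have h1 := congrFun hy ⟨i, hi⟩
      rw [thomas_mulVec_row n a b c A hA y Y hYk hY0 ⟨i, hi⟩] at h1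
      exact h1
    have hrecY := thomas_rec_of_rows a b c f n hdom Y hrows
    have hback := thomas_backsub a b c f n hn hc Y hrecY
    funext i
    have h4 := hback (n - 1 - (i : ℕ)) (by omega)
    rw [show n - 1 - (n - 1 - (i : ℕ)) = (i : ℕ) by omega, hYk _ i.isLt] at h4
    rw [hx]
    show y i = thomasRev a b c f n (n - 1 - (i : ℕ))
    rw [← h4]
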